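/- Let m ≥ 1 be an integer. Suppose given a commutative diagram of abelian groups with exact rows 0 → M → G → J → 0 and 0 → M → N → S → 0, in which the left vertical map M → M is the identity and the middle vertical map G → N is surjective. Assume that every element of G is divisible by m (for every g ∈ G there exists g' ∈ G with m·g' = g) and that N is torsion-free. Then the induced map J → S restricts to a surjection on m-torsion subgroups: for every s ∈ S with m·s = 0 there exists j ∈ J with m·j = 0 mapping to s. (This is the group-theoretic core of Theorem 3.1: surjectivity of the specialization map Trop : Jac_m(X) → Jac_m(Γ) on m-torsion of Jacobians.) -/
import Mathlib

/-!
STATEMENT 1 (group-theoretic core of Theorem 3.1: surjectivity of the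
specialization map `Trop : Jac_m(X) → Jac_m(Γ)`).

Given a commutative diagram of abelian groups with exact rows
`0 → M → G → J → 0` and `0 → M → N → S → 0`, identity on `M`, surjective
middle map `G → N`, with `G` `m`-divisible and `N` torsion-free, the induced
map `J → S` is surjective on `m`-torsion subgroups.
-/
theorem torsion_specialization_surjective
    {M G J N S : Type*} [AddCommGroup M] [AddCommGroup G] [AddCommGroup J]
    [AddCommGroup N] [AddCommGroup S]
    (m : ℕ) (hm : 1 ≤ m)
    (i₁ : M →+ G) (p₁ : G →+ J) (i₂ : M →+ N) (p₂ : N →+ S)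
    (q : G →+ N) (r : J →+ S)
    -- first row is exact
    (hi₁ : Function.Injective i₁) (hp₁ : Function.Surjective p₁)
    (hex₁ : ∀ g : G, p₁ g = 0 ↔ ∃ x : M, i₁ x = g)
    -- second row is exact
    (hi₂ : Function.Injective i₂) (hp₂ : Function.Surjective p₂)
    (hex₂ : ∀ n : N, p₂ n = 0 ↔ ∃ x : M, i₂ x = n)
    -- the diagram commutes, the left vertical map being the identity of M
    (hleft : ∀ x : M, q (i₁ x) = i₂ x)
    (hright : ∀ g : G, r (p₁ g) = p₂ (q g))
    -- the middle vertical map is surjective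
    (hqsurj : Function.Surjective q)
    -- G is m-divisible
    (hdiv : ∀ g : G, ∃ g' : G, m • g' = g)
    -- N is torsion-free
    (htf : ∀ (n : ℤ) (x : N), n ≠ 0 → n • x = 0 → x = 0) :
    ∀ s : S, m • s = 0 → ∃ j : J, m • j = 0 ∧ r j = s := by
  intro s hs
  -- lift s to n : N
  obtain ⟨n, hn⟩ := hp₂ s
  -- m • n is in the image of i₂
  have h1 : p₂ (m • n) = 0 := by rw [map_nsmul, hn, hs]
  obtain ⟨x, hx⟩ := (hex₂ (m • n)).mp h1
  -- lift n to g₀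
  obtain ⟨g₀, hg₀⟩ := hqsurj n
  -- correct g₀ by an element of ker q
  obtain ⟨h, hh⟩ := hdiv (m • g₀ - i₁ x)
  have hqh : q h = 0 := by
    apply htf (m : ℤ) _ (by exact_mod_cast Nat.one_le_iff_ne_zero.mp hm)
    have : (m : ℤ) • q h = q (m • h) := by
      rw [map_nsmul, natCast_zsmul]
    rw [this, hh, map_sub, map_nsmul, hg₀, hleft, hx, sub_self]
  refine ⟨p₁ (g₀ - h), ?_, ?_⟩
  · rw [← map_nsmul, (hex₁ _).mpr ⟨x, ?_⟩]
    rw [smul_sub, hh]; abel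
  · rw [hright, map_sub, hqh, hg₀, sub_zero, hn]
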